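/- Let X be a nonempty separable metrizable space and n a natural number. Then dim X ≤ n if and only if there exist a nonempty zero-dimensional separable metrizable space Y and a closed continuous surjection f : Y → X such that every fiber f⁻¹(x) has at most n+1 points. -/

import Mathlib

set_option maxHeartbeats 1000000

universe u

/-- The covering dimension of `X` is at most `n`: every finite open cover has an open
refinement in which every point belongs to at most `n + 1` members. -/
def CovDimLE (X : Type*) [TopologicalSpace X] (n : ℤ) : Prop :=
  ∀ 𝒰 : Set (Set X), 𝒰.Finite → (∀ U ∈ 𝒰, IsOpen U) → ⋃₀ 𝒰 = Set.univ →
    ∃ 𝒱 : Set (Set X), 𝒱.Finite ∧ (∀ V ∈ 𝒱, IsOpen V) ∧ ⋃₀ 𝒱 = Set.univ ∧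
      (∀ V ∈ 𝒱, ∃ U ∈ 𝒰, V ⊆ U) ∧
      ∀ x : X, ({V ∈ 𝒱 | x ∈ V}.ncard : ℤ) ≤ n + 1

/-- A space is zero-dimensional if it has a basis consisting of clopen sets. -/
def ZeroDimensional (X : Type*) [TopologicalSpace X] : Prop :=
  ∃ B : Set (Set X), TopologicalSpace.IsTopologicalBasis B ∧ ∀ U ∈ B, IsClopen U

open Set TopologicalSpace Function Filter Topology

/-- Swelling lemma: a finite family of closed sets inside opens can be enlarged to open
sets so that intersections of closures are nonempty only if the corresponding closed
intersections are. -/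
theorem swelling_aux {X : Type*} [TopologicalSpace X] [NormalSpace X] {ι : Type*} [Fintype ι] [DecidableEq ι]
    (F u : ι → Set X) (hF : ∀ i, IsClosed (F i)) (hu : ∀ i, IsOpen (u i))
    (hFu : ∀ i, F i ⊆ u i) (t : Finset ι) :
    ∃ V : ι → Set X, (∀ i ∈ t, IsOpen (V i) ∧ F i ⊆ V i ∧ closure (V i) ⊆ u i) ∧
      (∀ i ∉ t, V i = F i) ∧
      ∀ s : Finset ι,
        (⋂ i ∈ s, (if i ∈ t then closure (V i) else F i)).Nonempty →
        (⋂ i ∈ s, F i).Nonempty := by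
  classical
  induction t using Finset.induction_on with
  | empty =>
      refine ⟨F, by simp, fun i _ => rfl, fun s hs => ?_⟩
      simpa using hs
  | @insert j t hj IH =>
      obtain ⟨V, hVt, hVout, hVkey⟩ := IH
      set K : ι → Set X := fun i => if i ∈ t then closure (V i) else F i with hK
      have hKclosed : ∀ i, IsClosed (K i) := by
        intro i
        by_cases h : i ∈ t <;> simp [hK, h, isClosed_closure, hF i]
      -- the bad set
      set Z : Set X := ⋃ s ∈ {s : Finset ι | ¬(F j ∩ ⋂ i ∈ s, K i).Nonempty}, ⋂ i ∈ s, K i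
        with hZ
      have hZclosed : IsClosed Z := by
        apply Set.Finite.isClosed_biUnion (Set.toFinite _)
        intro s _
        exact isClosed_biInter fun i _ => hKclosed i
      have hFZ : F j ⊆ (u j) ∩ Zᶜ := by
        intro x hx
        refine ⟨hFu j hx, ?_⟩
        intro hxZ
        simp only [hZ, Set.mem_iUnion, Set.mem_setOf_eq] at hxZ
        obtain ⟨s, hs, hxs⟩ := hxZ
        exact hs ⟨x, hx, hxs⟩
      obtain ⟨W, hWopen, hFW, hWcl⟩ :=
        normal_exists_closure_subset (hF j) ((hu j).inter hZclosed.isOpen_compl) hFZ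
      refine ⟨Function.update V j W, ?_, ?_, ?_⟩
      · intro i hi
        rcases Finset.mem_insert.1 hi with rfl | hi
        · refine ⟨by simp [hWopen], by simp [hFW], ?_⟩
          simp only [Function.update_self]
          exact hWcl.trans (Set.inter_subset_left)
        · have hij : i ≠ j := fun h => hj (h ▸ hi)
          simpa [Function.update_of_ne hij] using hVt i hi
      · intro i hi
        have hij : i ≠ j := fun h => hi (h ▸ Finset.mem_insert_self j t)
        have hit : i ∉ t := fun h => hi (Finset.mem_insert_of_mem h)
        simp [Function.update_of_ne hij, hVout i hit]
      · intro s hs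
        by_cases hjs : j ∈ s
        · obtain ⟨x, hx⟩ := hs
          have hxW : x ∈ closure W := by
            have := Set.mem_iInter₂.1 hx j hjs
            simpa [Finset.mem_insert, Function.update_self] using this
          have hxK : ∀ i ∈ s.erase j, x ∈ K i := by
            intro i hi
            have hij : i ≠ j := Finset.ne_of_mem_erase hi
            have his : i ∈ s := Finset.mem_of_mem_erase hi
            have := Set.mem_iInter₂.1 hx i his
            by_cases hit : i ∈ t
            · simpa [hK, hit, Finset.mem_insert, Function.update_of_ne hij] using this
            · have : x ∈ F i := by
                simpa [Finset.mem_insert, hij, hit, Function.update_of_ne hij] using this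
              simpa [hK, hit] using this
          -- s.erase j is "good"
          have hgood : (F j ∩ ⋂ i ∈ s.erase j, K i).Nonempty := by
            by_contra hbad
            have hsub : (⋂ i ∈ s.erase j, K i) ⊆ Z := by
              intro y hy
              exact Set.mem_biUnion (by simpa using hbad) hy
            have : x ∈ Z := hsub (Set.mem_iInter₂.2 hxK)
            exact (hWcl hxW).2 this
          obtain ⟨y, hyF, hyK⟩ := hgood
          have : (⋂ i ∈ s, K i).Nonempty := by
            refine ⟨y, Set.mem_iInter₂.2 fun i hi => ?_⟩
            by_cases hij : i = j
            · subst hij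
              simp [hK, hj, hyF]
            · exact Set.mem_iInter₂.1 hyK i (Finset.mem_erase.2 ⟨hij, hi⟩)
          exact hVkey s this
        · apply hVkey s
          refine ⟨hs.choose, Set.mem_iInter₂.2 fun i hi => ?_⟩
          have hij : i ≠ j := fun h => hjs (h ▸ hi)
          have := Set.mem_iInter₂.1 hs.choose_spec i hi
          by_cases hit : i ∈ t <;>
            simpa [hK, hit, Finset.mem_insert, hij, Function.update_of_ne hij] using this


/-- In a nonempty zero-dimensional second-countable space, any open cover indexed by a
nonempty type admits a clopen disjoint precise refinement partition. -/
theorem clopen_partition {Y : Type*} [TopologicalSpace Y] [SecondCountableTopology Y]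
    [Nonempty Y] (hz : ZeroDimensional Y) {ι : Type*} [Nonempty ι] (G : ι → Set Y)
    (hG : ∀ i, IsOpen (G i)) (hcov : (⋃ i, G i) = univ) :
    ∃ W : ι → Set Y, (∀ i, IsClopen (W i)) ∧ (∀ i, W i ⊆ G i) ∧ (⋃ i, W i) = univ ∧
      Pairwise (Function.onFun Disjoint W) := by
  classical
  obtain ⟨B, hB, hBclopen⟩ := hz
  set S : Set (Set Y) := {b ∈ B | ∃ i, b ⊆ G i} with hS
  have hSopen : ∀ s ∈ S, IsOpen s := fun s hs => (hBclopen s hs.1).2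
  have hScov : ⋃₀ S = univ := by
    apply Set.eq_univ_of_forall
    intro y
    have : y ∈ ⋃ i, G i := hcov ▸ mem_univ y
    obtain ⟨i, hi⟩ := Set.mem_iUnion.1 this
    obtain ⟨b, hbB, hyb, hbG⟩ := hB.exists_subset_of_mem_open hi (hG i)
    exact ⟨b, ⟨hbB, i, hbG⟩, hyb⟩
  obtain ⟨T, hTc, hTS, hTcov⟩ := isOpen_sUnion_countable S hSopen
  have hTne : T.Nonempty := by
    rcases Set.eq_empty_or_nonempty T with rfl | h
    · exfalso
      have h2 := hTcov.trans hScov  -- ⋃₀ ∅ = univ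
      rw [Set.sUnion_empty] at h2
      exact (h2 ▸ Set.notMem_empty (Classical.arbitrary Y)) (mem_univ (Classical.arbitrary Y))
    · exact h
  obtain ⟨C, hC⟩ := hTc.exists_eq_range hTne
  have hCS : ∀ m, C m ∈ S := fun m => hTS (hC ▸ Set.mem_range_self m)
  have hCclopen : ∀ m, IsClopen (C m) := fun m => hBclopen _ (hCS m).1
  have hCcov : (⋃ m, C m) = univ := by
    rw [← Set.sUnion_range, ← hC, hTcov, hScov]
  choose g hg using fun m => (hCS m).2
  -- disjointify
  set D : ℕ → Set Y := fun m => C m \ ⋃ j ∈ Finset.range m, C j with hD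
  have hDclopen : ∀ m, IsClopen (D m) := fun m =>
    (hCclopen m).diff (isClopen_biUnion_finset (fun j _ => hCclopen j))
  have hDC : ∀ m, D m ⊆ C m := fun m => Set.diff_subset
  have hDmem : ∀ y, y ∈ ⋃ m, C m → ∃ m, y ∈ D m := by
    intro y hy
    have hex : ∃ m, y ∈ C m := Set.mem_iUnion.1 hy
    refine ⟨Nat.find hex, Nat.find_spec hex, ?_⟩
    intro hmem
    simp only [Set.mem_iUnion, Finset.mem_range, exists_prop] at hmem
    obtain ⟨j, hjlt, hj⟩ := hmem
    exact (Nat.find_min hex hjlt) hj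
  have hDcov : (⋃ m, D m) = univ :=
    Set.eq_univ_of_forall fun y => Set.mem_iUnion.2 (hDmem y (hCcov ▸ mem_univ y))
  have hDdisj : ∀ m m', m ≠ m' → Disjoint (D m) (D m') := by
    intro m m' hne
    rcases hne.lt_or_gt with h | h
    · refine Set.disjoint_left.2 fun y hym hym' => ?_
      exact hym'.2 (Set.mem_biUnion (Finset.mem_range.2 h) (hDC m hym))
    · refine Set.disjoint_left.2 fun y hym hym' => ?_
      exact hym.2 (Set.mem_biUnion (Finset.mem_range.2 h) (hDC m' hym'))
  -- group
  set W : ι → Set Y := fun i => ⋃ m ∈ {m | g m = i}, D m with hW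
  have hWopen : ∀ i, IsOpen (W i) := fun i =>
    isOpen_biUnion fun m _ => (hDclopen m).2
  have hWdisj : Pairwise (Function.onFun Disjoint W) := by
    intro i i' hii
    refine Set.disjoint_left.2 fun y hy hy' => ?_
    simp only [hW, Set.mem_iUnion, Set.mem_setOf_eq, exists_prop] at hy hy'
    obtain ⟨m, rfl, hym⟩ := hy
    obtain ⟨m', rfl, hym'⟩ := hy'
    have hmm : m ≠ m' := fun h => hii (by rw [h])
    exact Set.disjoint_left.1 (hDdisj m m' hmm) hym hym'
  have hWcov : (⋃ i, W i) = univ := by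
    apply Set.eq_univ_of_forall
    intro y
    obtain ⟨m, hm⟩ := Set.mem_iUnion.1 (hDcov ▸ mem_univ y)
    exact Set.mem_iUnion.2 ⟨g m, Set.mem_biUnion rfl hm⟩
  have hWclosed : ∀ i, IsClosed (W i) := by
    intro i
    rw [← isOpen_compl_iff]
    have hcompl : (W i)ᶜ = ⋃ m ∈ {m | g m ≠ i}, D m := by
      apply Set.eq_of_subset_of_subset
      · intro y hy
        obtain ⟨m, hm⟩ := Set.mem_iUnion.1 (hDcov ▸ mem_univ y)
        refine Set.mem_biUnion (fun hgm => ?_) hm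
        exact hy (Set.mem_biUnion hgm hm)
      · intro y hy hyW
        simp only [hW, Set.mem_iUnion, Set.mem_setOf_eq, exists_prop] at hy hyW
        obtain ⟨m, hgm, hym⟩ := hy
        obtain ⟨m', hgm', hym'⟩ := hyW
        have : m ≠ m' := fun h => hgm (h ▸ hgm')
        exact Set.disjoint_left.1 (hDdisj m m' this) hym hym'
    rw [hcompl]
    exact isOpen_biUnion fun m _ => (hDclopen m).2
  refine ⟨W, fun i => ⟨hWclosed i, hWopen i⟩, ?_, hWcov, hWdisj⟩
  intro i y hy
  simp only [hW, Set.mem_iUnion, Set.mem_setOf_eq, exists_prop] at hy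
  obtain ⟨m, rfl, hym⟩ := hy
  exact hg m (hDC m hym)


/-- A good cover: finite open cover of order at most `n+1`. -/
def GoodCover {X : Type*} [TopologicalSpace X] (n : ℕ) (𝒞 : Set (Set X)) : Prop :=
  𝒞.Finite ∧ (∀ V ∈ 𝒞, IsOpen V) ∧ ⋃₀ 𝒞 = Set.univ ∧
    ∀ x : X, {V ∈ 𝒞 | x ∈ V}.ncard ≤ n + 1

theorem goodCover_univ {X : Type*} [TopologicalSpace X] (n : ℕ) :
    GoodCover n ({Set.univ} : Set (Set X)) := by
  refine ⟨Set.finite_singleton _, ?_, by simp, ?_⟩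
  · rintro V rfl; exact isOpen_univ
  · intro x
    have : {V ∈ ({Set.univ} : Set (Set X)) | x ∈ V} = {Set.univ} := by
      ext V; simp +contextual [Set.mem_singleton_iff]
    rw [this, Set.ncard_singleton]
    omega

/-- One refinement step: refine a good cover to a good cover whose closures refine it and
which decides the pair `(b, B)`. -/
theorem step_lemma {X : Type*} [TopologicalSpace X] [NormalSpace X] {n : ℕ}
    (hdim : CovDimLE X n) {𝒞 : Set (Set X)} (h𝒞 : GoodCover n 𝒞) {b B : Set X}
    (hB : IsOpen B) (hbB : closure b ⊆ B) :
    ∃ 𝒟, GoodCover n 𝒟 ∧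
      ∀ V ∈ 𝒟, (∃ U ∈ 𝒞, closure V ⊆ U) ∧ (V ⊆ B ∨ V ⊆ (closure b)ᶜ) := by
  classical
  obtain ⟨hfin, hopen, hcov, horder⟩ := h𝒞
  haveI := hfin.fintype
  have husub : (Set.univ : Set X) ⊆ ⋃ i : ↥𝒞, (i : Set X) := by
    intro x _
    obtain ⟨U, hU, hxU⟩ := Set.mem_sUnion.1 (hcov ▸ Set.mem_univ x)
    exact Set.mem_iUnion.2 ⟨⟨U, hU⟩, hxU⟩
  obtain ⟨v, hvcov, hvopen, hvcl⟩ := exists_subset_iUnion_closure_subset isClosed_univ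
    (fun i : ↥𝒞 => hopen _ i.2) (fun x _ => Set.toFinite _) husub
  set 𝒲 : Set (Set X) :=
    (fun i : ↥𝒞 => v i ∩ B) '' Set.univ ∪ (fun i : ↥𝒞 => v i ∩ (closure b)ᶜ) '' Set.univ
    with h𝒲
  have h𝒲fin : 𝒲.Finite := ((Set.finite_univ).image _).union ((Set.finite_univ).image _)
  have h𝒲open : ∀ W ∈ 𝒲, IsOpen W := by
    rintro W (⟨i, -, rfl⟩ | ⟨i, -, rfl⟩)
    · exact (hvopen i).inter hB
    · exact (hvopen i).inter isClosed_closure.isOpen_compl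
  have h𝒲cov : ⋃₀ 𝒲 = Set.univ := by
    apply Set.eq_univ_of_forall
    intro x
    obtain ⟨i, hi⟩ := Set.mem_iUnion.1 (hvcov (Set.mem_univ x))
    by_cases hxB : x ∈ B
    · exact ⟨v i ∩ B, Or.inl ⟨i, Set.mem_univ i, rfl⟩, hi, hxB⟩
    · refine ⟨v i ∩ (closure b)ᶜ, Or.inr ⟨i, Set.mem_univ i, rfl⟩, hi, fun hxb => ?_⟩
      exact hxB (hbB hxb)
  obtain ⟨𝒟, h1, h2, h3, h4, h5⟩ := hdim 𝒲 h𝒲fin h𝒲open h𝒲cov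
  have h5' : ∀ x : X, {V ∈ 𝒟 | x ∈ V}.ncard ≤ n + 1 := fun x => by
    have := h5 x; exact_mod_cast this
  refine ⟨𝒟, ⟨h1, h2, h3, h5'⟩, ?_⟩
  intro V hV
  obtain ⟨W, hW, hVW⟩ := h4 V hV
  rcases hW with ⟨i, -, rfl⟩ | ⟨i, -, rfl⟩
  · exact ⟨⟨↑i, i.2, (closure_mono (hVW.trans Set.inter_subset_left)).trans (hvcl i)⟩,
      Or.inl (hVW.trans Set.inter_subset_right)⟩
  · exact ⟨⟨↑i, i.2, (closure_mono (hVW.trans Set.inter_subset_left)).trans (hvcl i)⟩,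
      Or.inr (hVW.trans Set.inter_subset_right)⟩

/-- A countable separating family of pairs of open sets. -/
theorem exists_pairs (X : Type*) [TopologicalSpace X] [Nonempty X] [T1Space X]
    [NormalSpace X] [SecondCountableTopology X] :
    ∃ pb pB : ℕ → Set X, (∀ k, IsOpen (pb k)) ∧ (∀ k, IsOpen (pB k)) ∧
      (∀ k, closure (pb k) ⊆ pB k) ∧
      ∀ (x : X) (O : Set X), IsOpen O → x ∈ O → ∃ k, x ∈ pb k ∧ pB k ⊆ O := by
  classical
  set B := TopologicalSpace.countableBasis X with hBdef
  have hB : IsTopologicalBasis B := isBasis_countableBasis X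
  have hBc : B.Countable := countable_countableBasis X
  set Q : Set (Set X × Set X) :=
    {p | p.1 ∈ B ∧ p.2 ∈ B ∧ closure p.1 ⊆ p.2} with hQdef
  have hQc : Q.Countable := by
    apply (hBc.prod hBc).mono
    intro p hp
    exact Set.mem_prod.2 ⟨hp.1, hp.2.1⟩
  have key : ∀ (x : X) (O : Set X), IsOpen O → x ∈ O →
      ∃ p ∈ Q, x ∈ p.1 ∧ p.2 ⊆ O := by
    intro x O hO hxO
    obtain ⟨b2, hb2B, hxb2, hb2O⟩ := hB.exists_subset_of_mem_open hxO hO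
    obtain ⟨w, hwopen, hxw, hwcl⟩ := normal_exists_closure_subset (isClosed_singleton (x := x))
      (hB.isOpen hb2B) (Set.singleton_subset_iff.2 hxb2)
    obtain ⟨b1, hb1B, hxb1, hb1w⟩ := hB.exists_subset_of_mem_open
      (hxw (Set.mem_singleton x)) hwopen
    exact ⟨(b1, b2), ⟨hb1B, hb2B, (closure_mono hb1w).trans hwcl⟩, hxb1, hb2O⟩
  have hQne : Q.Nonempty := by
    obtain ⟨p, hp, -, -⟩ := key (Classical.arbitrary X) Set.univ isOpen_univ (Set.mem_univ _)
    exact ⟨p, hp⟩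
  obtain ⟨e, he⟩ := hQc.exists_eq_range hQne
  have heQ : ∀ k, e k ∈ Q := fun k => he ▸ Set.mem_range_self k
  refine ⟨fun k => (e k).1, fun k => (e k).2, fun k => hB.isOpen (heQ k).1,
    fun k => hB.isOpen (heQ k).2.1, fun k => (heQ k).2.2, ?_⟩
  intro x O hO hxO
  obtain ⟨p, hp, hx1, h2O⟩ := key x O hO hxO
  obtain ⟨k, hk⟩ := he ▸ hp
  exact ⟨k, by simp only []; rw [hk]; exact hx1, by simp only []; rw [hk]; exact h2O⟩


theorem ncard_le_of_encard_le {α : Type*} {s : Set α} {k : ℕ} (h : s.encard ≤ (k : ℕ∞)) :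
    s.ncard ≤ k := by
  obtain ⟨hfin, n₀, he, hle⟩ := Set.encard_le_coe_iff.1 h
  have : s.ncard = n₀ := by rw [Set.ncard_def, he]; rfl
  omega

theorem backward_dir {X : Type*} [TopologicalSpace X] [Nonempty X]
    [TopologicalSpace.MetrizableSpace X] (n : ℕ)
    {Y : Type*} [TopologicalSpace Y] [Nonempty Y] [TopologicalSpace.SeparableSpace Y]
    [TopologicalSpace.MetrizableSpace Y] (hzY : ZeroDimensional Y)
    (f : Y → X) (hc : Continuous f) (hcl : IsClosedMap f) (hsurj : Function.Surjective f)
    (hfib : ∀ x : X, (f ⁻¹' {x}).encard ≤ n + 1) : CovDimLE X n := by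
  classical
  letI : MetricSpace Y := TopologicalSpace.metrizableSpaceMetric Y
  haveI : SecondCountableTopology Y := UniformSpace.secondCountable_of_separable Y
  letI : MetricSpace X := TopologicalSpace.metrizableSpaceMetric X
  intro 𝒰 hfin hopen hcov
  haveI : Nonempty ↥𝒰 := by
    obtain ⟨U, hU, -⟩ := Set.mem_sUnion.1 (hcov ▸ Set.mem_univ (Classical.arbitrary X))
    exact ⟨⟨U, hU⟩⟩
  haveI := hfin.fintype
  set G : ↥𝒰 → Set Y := fun i => f ⁻¹' ↑i with hGdef
  have hGopen : ∀ i, IsOpen (G i) := fun i => (hopen _ i.2).preimage hc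
  have hGcov : (⋃ i, G i) = univ := by
    apply Set.eq_univ_of_forall
    intro y
    obtain ⟨U, hU, hyU⟩ := Set.mem_sUnion.1 (hcov ▸ Set.mem_univ (f y))
    exact Set.mem_iUnion.2 ⟨⟨U, hU⟩, hyU⟩
  obtain ⟨W, hWclopen, hWG, hWcov, hWdisj⟩ := clopen_partition hzY G hGopen hGcov
  set F : ↥𝒰 → Set X := fun i => f '' W i with hFdef
  have hFclosed : ∀ i, IsClosed (F i) := fun i => hcl _ (hWclopen i).1
  have hFsub : ∀ i, F i ⊆ ↑i := by
    intro i x hx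
    obtain ⟨y, hy, rfl⟩ := hx
    exact hWG i hy
  have hFcov : ∀ x : X, ∃ i, x ∈ F i := by
    intro x
    obtain ⟨y, rfl⟩ := hsurj x
    obtain ⟨i, hi⟩ := Set.mem_iUnion.1 (hWcov ▸ Set.mem_univ y)
    exact ⟨i, Set.mem_image_of_mem f hi⟩
  -- order bound on the closed cover F
  have hForder : ∀ z : X, {i : ↥𝒰 | z ∈ F i}.ncard ≤ n + 1 := by
    intro z
    have hpick : ∀ i : ↥𝒰, ∃ y, z ∈ F i → y ∈ W i ∧ f y = z := by
      intro i
      by_cases hi : z ∈ F i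
      · obtain ⟨y, hy, hfy⟩ := hi
        exact ⟨y, fun _ => ⟨hy, hfy⟩⟩
      · exact ⟨Classical.arbitrary Y, fun h => absurd h hi⟩
    choose p hp using hpick
    have hmaps : Set.MapsTo p {i : ↥𝒰 | z ∈ F i} (f ⁻¹' {z}) := by
      intro i hi
      simp only [Set.mem_preimage, Set.mem_singleton_iff]
      exact (hp i hi).2
    have hinj : Set.InjOn p {i : ↥𝒰 | z ∈ F i} := by
      intro a ha b hb hab
      by_contra hne
      exact Set.disjoint_left.1 (hWdisj hne) (hab ▸ (hp a ha).1) ((hp b hb).1)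
    have h1 : {i : ↥𝒰 | z ∈ F i}.encard ≤ (f ⁻¹' {z}).encard :=
      Set.encard_le_encard_of_injOn hmaps hinj
    have h2 : {i : ↥𝒰 | z ∈ F i}.encard ≤ ((n + 1 : ℕ) : ℕ∞) := by
      refine h1.trans ((hfib z).trans_eq ?_)
      push_cast
      rfl
    exact ncard_le_of_encard_le h2
  -- swell the closed cover to an open cover
  obtain ⟨V, hVt, -, hVkey⟩ := swelling_aux F (fun i : ↥𝒰 => (i : Set X)) hFclosed
    (fun i => hopen _ i.2) hFsub Finset.univ
  have hVopen : ∀ i, IsOpen (V i) := fun i => (hVt i (Finset.mem_univ i)).1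
  have hFV : ∀ i, F i ⊆ V i := fun i => (hVt i (Finset.mem_univ i)).2.1
  have hVU : ∀ i, closure (V i) ⊆ ↑i := fun i => (hVt i (Finset.mem_univ i)).2.2
  refine ⟨Set.range V, Set.finite_range V, ?_, ?_, ?_, ?_⟩
  · rintro A ⟨i, rfl⟩
    exact hVopen i
  · apply Set.eq_univ_of_forall
    intro x
    obtain ⟨i, hi⟩ := hFcov x
    exact ⟨V i, ⟨i, rfl⟩, hFV i hi⟩
  · rintro A ⟨i, rfl⟩
    exact ⟨↑i, i.2, (subset_closure.trans (hVU i))⟩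
  · intro x
    set T : Set ↥𝒰 := {i | x ∈ V i} with hT
    have hTfin : T.Finite := Set.toFinite T
    have him : {A ∈ Set.range V | x ∈ A} ⊆ V '' T := by
      rintro A ⟨⟨i, rfl⟩, hx⟩
      exact ⟨i, hx, rfl⟩
    have hkey : (⋂ i ∈ hTfin.toFinset, F i).Nonempty := by
      apply hVkey
      refine ⟨x, Set.mem_iInter₂.2 fun i hi => ?_⟩
      simp only [Finset.mem_univ, if_true]
      exact subset_closure (by simpa [hT] using (Set.Finite.mem_toFinset hTfin).1 hi)
    obtain ⟨z, hz⟩ := hkey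
    have hTsub : T ⊆ {i : ↥𝒰 | z ∈ F i} := by
      intro i hi
      exact Set.mem_iInter₂.1 hz i ((Set.Finite.mem_toFinset hTfin).2 hi)
    have hc1 : {A ∈ Set.range V | x ∈ A}.ncard ≤ T.ncard :=
      le_trans (Set.ncard_le_ncard him (hTfin.image V)) (Set.ncard_image_le hTfin)
    have hc2 : T.ncard ≤ n + 1 :=
      le_trans (Set.ncard_le_ncard hTsub (Set.toFinite _)) (hForder z)
    have : {A ∈ Set.range V | x ∈ A}.ncard ≤ n + 1 := le_trans hc1 hc2
    exact_mod_cast this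


theorem forward_dir {X : Type u} [TopologicalSpace X] [Nonempty X]
    [TopologicalSpace.SeparableSpace X] [TopologicalSpace.MetrizableSpace X] (n : ℕ)
    (hdim : CovDimLE X n) :
    ∃ (Y : Type u) (_ : TopologicalSpace Y), Nonempty Y ∧
      TopologicalSpace.SeparableSpace Y ∧ TopologicalSpace.MetrizableSpace Y ∧
      ZeroDimensional Y ∧
      ∃ f : Y → X, Continuous f ∧ IsClosedMap f ∧ Function.Surjective f ∧
        ∀ x : X, (f ⁻¹' {x}).encard ≤ n + 1 := by
  classical
  letI : MetricSpace X := TopologicalSpace.metrizableSpaceMetric X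
  haveI : SecondCountableTopology X := UniformSpace.secondCountable_of_separable X
  obtain ⟨pb, pB, hpbO, hpBO, hpbB, hsep⟩ := exists_pairs X
  -- the sequence of good covers
  obtain ⟨L, hLgood, hLlink⟩ :
      ∃ L : ℕ → Set (Set X), (∀ k, GoodCover n (L k)) ∧
        ∀ k, ∀ V ∈ L (k + 1),
          (∃ U ∈ L k, closure V ⊆ U) ∧ (V ⊆ pB k ∨ V ⊆ (closure (pb k))ᶜ) := by
    set step : ℕ → Set (Set X) → Set (Set X) := fun k 𝒞 =>
      if h : GoodCover n 𝒞 then (step_lemma hdim h (hpBO k) (hpbB k)).choose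
      else {Set.univ} with hstep
    refine ⟨fun k => Nat.rec {Set.univ} (fun k ih => step k ih) k, ?_, ?_⟩
    · intro k
      induction k with
      | zero => exact goodCover_univ n
      | succ k IH =>
          show GoodCover n (step k _)
          rw [hstep] at IH ⊢
          beta_reduce at IH ⊢
          rw [dif_pos IH]
          exact (step_lemma hdim IH (hpBO k) (hpbB k)).choose_spec.1
    · intro k
      have IH : GoodCover n (Nat.rec {Set.univ} (fun k ih => step k ih) k : Set (Set X)) := by
        induction k with
        | zero => exact goodCover_univ n
        | succ k IH2 =>
            show GoodCover n (step k _)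
            rw [hstep] at IH2 ⊢
            beta_reduce at IH2 ⊢
            rw [dif_pos IH2]
            exact (step_lemma hdim IH2 (hpBO k) (hpbB k)).choose_spec.1
      show ∀ V ∈ step k _, _
      rw [hstep] at IH ⊢
      beta_reduce at IH ⊢
      rw [dif_pos IH]
      exact (step_lemma hdim IH (hpBO k) (hpbB k)).choose_spec.2
  -- parent map
  obtain ⟨par, hpar⟩ :
      ∃ par : ℕ → Set X → Set X, ∀ k V, V ∈ L (k + 1) →
        par k V ∈ L k ∧ closure V ⊆ par k V := by
    refine ⟨fun k V => if h : ∃ U, U ∈ L k ∧ closure V ⊆ U then h.choose else Set.univ, ?_⟩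
    intro k V hV
    have h : ∃ U, U ∈ L k ∧ closure V ⊆ U := by
      obtain ⟨U, hU, hcl⟩ := (hLlink k V hV).1
      exact ⟨U, hU, hcl⟩
    simp only [dif_pos h]
    exact h.choose_spec
  -- a member of each level containing any given point
  have hcovmem : ∀ (k : ℕ) (x : X), ∃ V, V ∈ L k ∧ x ∈ V := by
    intro k x
    obtain ⟨V, hV, hxV⟩ := Set.mem_sUnion.1 ((hLgood k).2.2.1 ▸ Set.mem_univ x)
    exact ⟨V, hV, hxV⟩
  choose t ht1 ht2 using hcovmem
  haveI hfink : ∀ k, Finite ↥(L k) := fun k => (hLgood k).1.to_subtype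
  letI : ∀ k, TopologicalSpace ↥(L k) := fun _ => ⊥
  haveI hdisc : ∀ k, DiscreteTopology ↥(L k) := fun k => ⟨rfl⟩
  haveI : ∀ k, CompactSpace ↥(L k) := fun k => Finite.compactSpace
  haveI : ∀ k, SecondCountableTopology ↥(L k) := fun k => Finite.toSecondCountableTopology
  haveI : ∀ k, RegularSpace ↥(L k) := fun k =>
    RegularSpace.of_lift'_closure fun x => by
      rw [nhds_discrete, Filter.lift'_pure (monotone_closure _),
        (isClosed_discrete _).closure_eq, principal_singleton]
  haveI hT3 : T3Space (∀ k, ↥(L k)) := by infer_instance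
  haveI hmetr : TopologicalSpace.MetrizableSpace (∀ k, ↥(L k)) := by infer_instance
  haveI hcomp : CompactSpace (∀ k, ↥(L k)) := by infer_instance
  haveI hsc : SecondCountableTopology (∀ k, ↥(L k)) := by infer_instance
  -- the space of threads
  set T : Set (∀ k, ↥(L k)) :=
    {σ | (∀ k, par k ↑(σ (k + 1)) = (σ k : Set X)) ∧ ∃ x : X, ∀ k, x ∈ (σ k : Set X)}
    with hTdef
  have hmemT : ∀ σ : ↥T, (∀ k, par k ↑(σ.1 (k + 1)) = (σ.1 k : Set X)) ∧
      ∃ x : X, ∀ k, x ∈ (σ.1 k : Set X) := fun σ => σ.2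
  set f : ↥T → X := fun σ => (hmemT σ).2.choose with hfdef
  have hfx : ∀ (σ : ↥T) (k : ℕ), f σ ∈ (σ.1 k : Set X) := fun σ => (hmemT σ).2.choose_spec
  -- uniqueness of the point of a thread
  have huniq : ∀ (σ : ↥T) (x : X), (∀ k, x ∈ (σ.1 k : Set X)) → f σ = x := by
    intro σ x hx
    by_contra hne
    have hxO : x ∈ ({f σ}ᶜ : Set X) := fun h => hne (Set.mem_singleton_iff.1 h).symm
    obtain ⟨k, hk1, hk2⟩ := hsep x {f σ}ᶜ isClosed_singleton.isOpen_compl hxO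
    rcases (hLlink k ↑(σ.1 (k + 1)) (σ.1 (k + 1)).2).2 with hsub | hsub
    · exact hk2 (hsub (hfx σ (k + 1))) rfl
    · exact hsub (hx (k + 1)) (subset_closure hk1)
  -- approximate threads through a given point
  have hchain : ∀ (x : X) (m : ℕ), ∃ σ : ∀ k, ↥(L k), (∀ k, x ∈ (σ k : Set X)) ∧
      ∀ k, k + 1 ≤ m → par k ↑(σ (k + 1)) = (σ k : Set X) := by
    intro x m
    set A : ℕ → Set X := fun j => Nat.rec (t m x) (fun j ih => par (m - (j + 1)) ih) j
      with hA
    have hAsucc : ∀ j, A (j + 1) = par (m - (j + 1)) (A j) := fun j => rfl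
    have hAmem : ∀ j, j ≤ m → A j ∈ L (m - j) ∧ x ∈ A j := by
      intro j
      induction j with
      | zero => intro _; exact ⟨ht1 m x, ht2 m x⟩
      | succ j IH =>
          intro hj
          obtain ⟨h1, h2⟩ := IH (Nat.le_of_succ_le hj)
          have heq : m - j = (m - (j + 1)) + 1 := by omega
          rw [heq] at h1
          have hp := hpar (m - (j + 1)) (A j) h1
          exact ⟨by rw [hAsucc]; exact hp.1, by rw [hAsucc]; exact hp.2 (subset_closure h2)⟩
    refine ⟨fun k => if h : k ≤ m then ⟨A (m - k), ?_⟩ else ⟨t k x, ht1 k x⟩, ?_, ?_⟩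
    · have h1 := (hAmem (m - k) (by omega)).1
      rwa [show m - (m - k) = k by omega] at h1
    · intro k
      by_cases h : k ≤ m
      · simp only [dif_pos h]
        exact (hAmem (m - k) (by omega)).2
      · simp only [dif_neg h]
        exact ht2 k x
    · intro k hk
      have h1 : k ≤ m := by omega
      simp only [dif_pos hk, dif_pos h1]
      have heq : m - k = (m - (k + 1)) + 1 := by omega
      have h2 : A (m - k) = par (m - ((m - (k + 1)) + 1)) (A (m - (k + 1))) := by
        rw [heq]
      rw [h2, show m - ((m - (k + 1)) + 1) = k by omega]
  -- sequential compactness machinery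
  have hco : ∀ (v : ℕ → (∀ k, ↥(L k))) (σ : ∀ k, ↥(L k)),
      Tendsto v atTop (𝓝 σ) → ∀ k, ∀ᶠ m in atTop, v m k = σ k := by
    intro v σ h k
    have h1 : Tendsto (fun m => v m k) atTop (𝓝 (σ k)) := tendsto_pi_nhds.1 h k
    rw [nhds_discrete] at h1
    exact tendsto_pure.1 h1
  -- surjectivity core
  have hsurj : ∀ x : X, ∃ σ : ↥T, f σ = x := by
    intro x
    choose S hS1 hS2 using hchain x
    obtain ⟨σ, φ, hφ, hconv⟩ := CompactSpace.tendsto_subseq S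
    have hx : ∀ k, x ∈ (σ k : Set X) := by
      intro k
      obtain ⟨m, hm⟩ := ((hco _ σ hconv k).and (eventually_ge_atTop k)).exists
      rw [← hm.1]
      exact hS1 (φ m) k
    have hlink : ∀ k, par k ↑(σ (k + 1)) = (σ k : Set X) := by
      intro k
      obtain ⟨m, hm⟩ := (((hco _ σ hconv k).and (hco _ σ hconv (k + 1))).and
        (eventually_ge_atTop (k + 1))).exists
      have hφm : k + 1 ≤ φ m := le_trans hm.2 (hφ.le_apply)
      rw [← hm.1.1, ← hm.1.2]
      exact hS2 (φ m) k hφm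
    have hσT : σ ∈ T := ⟨hlink, x, hx⟩
    exact ⟨⟨σ, hσT⟩, huniq ⟨σ, hσT⟩ x hx⟩
  -- continuity
  have hcont : Continuous f := by
    rw [continuous_iff_continuousAt]
    intro σ₀
    rw [ContinuousAt, Filter.tendsto_def]
    intro O hO
    obtain ⟨O', hO'sub, hO'open, hmem⟩ := mem_nhds_iff.1 hO
    obtain ⟨j, hj1, hj2⟩ := hsep (f σ₀) O' hO'open hmem
    have hNopen : IsOpen {σ : ↥T | σ.1 (j + 1) = σ₀.1 (j + 1)} := by
      have heq : {σ : ↥T | σ.1 (j + 1) = σ₀.1 (j + 1)} =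
          (fun σ : ↥T => σ.1 (j + 1)) ⁻¹' {σ₀.1 (j + 1)} := rfl
      rw [heq]
      exact (isOpen_discrete _).preimage
        ((continuous_apply (j + 1)).comp continuous_subtype_val)
    refine Filter.mem_of_superset (hNopen.mem_nhds rfl) ?_
    intro σ hσ
    have hσ' : σ.1 (j + 1) = σ₀.1 (j + 1) := hσ
    rcases (hLlink j _ (σ₀.1 (j + 1)).2).2 with hsub | hsub
    · have hfσ : f σ ∈ (σ₀.1 (j + 1) : Set X) := by
        have h := hfx σ (j + 1)
        rwa [hσ'] at h
      exact hO'sub (hj2 (hsub hfσ))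
    · exact absurd (subset_closure hj1) (hsub (hfx σ₀ (j + 1)))
  -- closed map
  have hclosed : IsClosedMap f := by
    intro C hC
    apply IsSeqClosed.isClosed
    intro g x hg hgx
    choose c hc1 hc2 using hg
    obtain ⟨τ, φ, hφ, hconv⟩ := CompactSpace.tendsto_subseq fun m => (c m).1
    have hgφ : Tendsto (fun l => g (φ l)) atTop (𝓝 x) := hgx.comp hφ.tendsto_atTop
    have hlink : ∀ k, par k ↑(τ (k + 1)) = (τ k : Set X) := by
      intro k
      obtain ⟨l, hl⟩ := ((hco _ τ hconv k).and (hco _ τ hconv (k + 1))).exists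
      have hl1 : (c (φ l)).1 k = τ k := hl.1
      have hl2 : (c (φ l)).1 (k + 1) = τ (k + 1) := hl.2
      have h1 := (hmemT (c (φ l))).1 k
      rw [hl1, hl2] at h1
      exact h1
    have hxmem : ∀ k, x ∈ (τ k : Set X) := by
      intro k
      have hev2 : ∀ᶠ l in atTop, g (φ l) ∈ (τ (k + 1) : Set X) := by
        filter_upwards [hco _ τ hconv (k + 1)] with l hl
        have hl2 : (c (φ l)).1 (k + 1) = τ (k + 1) := hl
        have h := hfx (c (φ l)) (k + 1)
        rw [hl2] at h
        rwa [hc2 (φ l)] at h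
      have hcl : x ∈ closure (τ (k + 1) : Set X) := mem_closure_of_frequently_of_tendsto hev2.frequently hgφ
      have h3 := (hpar k _ (τ (k + 1)).2).2 hcl
      rwa [hlink k] at h3
    have hτT : τ ∈ T := ⟨hlink, x, hxmem⟩
    have hτC : (⟨τ, hτT⟩ : ↥T) ∈ C := by
      refine hC.mem_of_tendsto (b := (atTop : Filter ℕ)) ?_ (Eventually.of_forall fun l => hc1 (φ l))
      rw [tendsto_subtype_rng]
      exact hconv
    exact ⟨⟨τ, hτT⟩, hτC, huniq _ x hxmem⟩
  -- fibers
  have hfib : ∀ x : X, (f ⁻¹' {x}).encard ≤ (n : ℕ∞) + 1 := by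
    intro x
    by_contra hlt
    have hlt' : ((n : ℕ∞) + 1) < (f ⁻¹' {x}).encard := not_le.1 hlt
    have h2 : ((n + 2 : ℕ) : ℕ∞) ≤ (f ⁻¹' {x}).encard := by
      have h3 : ((n : ℕ∞) + 1) + 1 ≤ (f ⁻¹' {x}).encard :=
        (ENat.add_one_le_iff (by exact_mod_cast ENat.coe_ne_top (n + 1))).2 hlt'
      refine le_trans (le_of_eq ?_) h3
      push_cast
      ring
    obtain ⟨S, hSsub, hScard⟩ := Set.exists_subset_encard_eq h2
    have hSfin : S.Finite := Set.finite_of_encard_eq_coe hScard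
    have hag1 : ∀ (σ τ : ↥T) (k : ℕ), σ.1 (k + 1) = τ.1 (k + 1) → σ.1 k = τ.1 k := by
      intro σ τ k h
      have h1 := (hmemT σ).1 k
      have h2' := (hmemT τ).1 k
      apply Subtype.ext
      rw [← h1, ← h2', h]
    have hag : ∀ (σ τ : ↥T) (d j : ℕ), σ.1 (j + d) = τ.1 (j + d) → σ.1 j = τ.1 j := by
      intro σ τ d
      induction d with
      | zero => intro j h; exact h
      | succ d IH => intro j h; exact IH j (hag1 σ τ (j + d) h)
    have hdiffe : ∀ σ τ : ↥T, σ ≠ τ → ∃ k, σ.1 k ≠ τ.1 k := by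
      intro σ τ hne
      by_contra h
      push_neg at h
      exact hne (Subtype.ext (funext h))
    obtain ⟨d, hd⟩ : ∃ d : ↥T → ↥T → ℕ, ∀ σ τ : ↥T, σ ≠ τ → σ.1 (d σ τ) ≠ τ.1 (d σ τ) :=
      ⟨fun σ τ => if h : ∃ k, σ.1 k ≠ τ.1 k then h.choose else 0, by
        intro σ τ hne
        have hex : ∃ k, σ.1 k ≠ τ.1 k := hdiffe σ τ hne
        beta_reduce
        rw [dif_pos hex]
        exact hex.choose_spec⟩
    set K : ℕ := (hSfin.toFinset ×ˢ hSfin.toFinset).sup (fun p => d p.1 p.2) with hKdef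
    have hdK : ∀ σ ∈ S, ∀ τ ∈ S, d σ τ ≤ K := by
      intro σ hσ τ hτ
      exact Finset.le_sup (f := fun p => d p.1 p.2) (b := (σ, τ))
        (Finset.mem_product.2 ⟨hSfin.mem_toFinset.2 hσ, hSfin.mem_toFinset.2 hτ⟩)
    have hinjK : Set.InjOn (fun σ : ↥T => (σ.1 K : Set X)) S := by
      intro σ hσ τ hτ h
      by_contra hne
      have hKeq : σ.1 K = τ.1 K := Subtype.ext h
      have harith : d σ τ + (K - d σ τ) = K := by
        have := hdK σ hσ τ hτ
        omega
      have hagK := hag σ τ (K - d σ τ) (d σ τ) (by rw [harith]; exact hKeq)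
      exact hd σ τ hne hagK
    have hmapsK : Set.MapsTo (fun σ : ↥T => (σ.1 K : Set X)) S {V ∈ L K | x ∈ V} := by
      intro σ hσ
      have hfσ : f σ = x := by
        have := hSsub hσ
        simpa using this
      refine ⟨(σ.1 K).2, ?_⟩
      rw [← hfσ]
      exact hfx σ K
    have hcard1 : S.encard ≤ {V ∈ L K | x ∈ V}.encard :=
      Set.encard_le_encard_of_injOn hmapsK hinjK
    have hfinK : {V ∈ L K | x ∈ V}.Finite := (hLgood K).1.subset (Set.sep_subset _ _)
    have hcard2 : {V ∈ L K | x ∈ V}.encard = ({V ∈ L K | x ∈ V}.ncard : ℕ∞) := by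
      rw [hfinK.encard_eq_coe_toFinset_card, Set.ncard_eq_toFinset_card _ hfinK]
    have hcard3 := (hLgood K).2.2.2 x
    rw [hScard, hcard2] at hcard1
    have hfinal : (n + 2 : ℕ) ≤ {V ∈ L K | x ∈ V}.ncard := by exact_mod_cast hcard1
    omega
  -- zero-dimensionality
  have hzd : ZeroDimensional ↥T := by
    refine ⟨(Set.preimage (Subtype.val : ↥T → ∀ k, ↥(L k))) ''
      {s : Set (∀ k, ↥(L k)) | ∃ y m, s = PiNat.cylinder y m}, ?_, ?_⟩
    · exact (PiNat.isTopologicalBasis_cylinders (fun k => ↥(L k))).induced _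
    · rintro U ⟨s, ⟨y, m, rfl⟩, rfl⟩
      refine IsClopen.preimage ⟨?_, ?_⟩ continuous_subtype_val
      · rw [PiNat.cylinder_eq_pi]
        exact isClosed_set_pi fun a _ => isClosed_discrete _
      · exact PiNat.isOpen_cylinder _ _ _
  -- assemble
  obtain ⟨σ0, hσ0⟩ := hsurj (Classical.arbitrary X)
  haveI : SecondCountableTopology ↥T := inferInstance
  haveI : TopologicalSpace.SeparableSpace ↥T :=
    TopologicalSpace.SecondCountableTopology.to_separableSpace
  haveI : TopologicalSpace.MetrizableSpace ↥T := inferInstance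
  exact ⟨↥T, inferInstance, ⟨σ0⟩, inferInstance, inferInstance, hzd, f, hcont, hclosed,
    fun x => hsurj x, hfib⟩


/-- Hurewicz' theorem: a nonempty separable metrizable space `X` has covering dimension at
most `n` iff it is the image of a nonempty zero-dimensional separable metrizable space under
a closed continuous surjection with fibers of at most `n + 1` points. -/
theorem statement0 {X : Type u} [TopologicalSpace X] [Nonempty X]
    [TopologicalSpace.SeparableSpace X] [TopologicalSpace.MetrizableSpace X] (n : ℕ) :
    CovDimLE X n ↔
      ∃ (Y : Type u) (_ : TopologicalSpace Y), Nonempty Y ∧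
        TopologicalSpace.SeparableSpace Y ∧ TopologicalSpace.MetrizableSpace Y ∧
        ZeroDimensional Y ∧
        ∃ f : Y → X, Continuous f ∧ IsClosedMap f ∧ Function.Surjective f ∧
          ∀ x : X, (f ⁻¹' {x}).encard ≤ n + 1 := by
  constructor
  · intro h
    exact forward_dir n h
  · rintro ⟨Y, tY, hne, hsY, hmY, hzd, f, hc, hcl, hsurj, hfib⟩
    exact backward_dir n hzd f hc hcl hsurj hfib
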